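/- Let p be an odd prime, P = ⟨x⟩ cyclic of order p, and E = Aut(P), which is cyclic of order p−1. Then the fixed-point space Der_k(kP)^E is one-dimensional over k, and it is spanned by a derivation D whose p-fold composite D∘D∘⋯∘D (p factors) equals D; that is, HH^1(kP)^E ≅ Der_k(kP)^E has a p-toral basis. -/

import Mathlib

open MonoidAlgebra

namespace StatementTen

open Finsupp Multiplicative

variable (p : ℕ) [Fact p.Prime] (k : Type*) [Field k] [CharP k p]

/-- The canonical ring homomorphism `ZMod p →+* k` for `k` of characteristic `p`. -/
noncomputable def cc : ZMod p →+* k := ZMod.castHom dvd_rfl k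

/-- The underlying linear map of the Euler derivation. -/
noncomputable def eulerL :
    MonoidAlgebra k (Multiplicative (ZMod p)) →ₗ[k] MonoidAlgebra k (Multiplicative (ZMod p)) :=
  (Finsupp.lsum k fun g => (cc p k (toAdd g)) • (MonoidAlgebra.lsingle (R := k) (S := k) g)) ∘ₗ
    (MonoidAlgebra.coeffLinearEquiv k).toLinearMap

theorem eulerL_single (g : Multiplicative (ZMod p)) (r : k) :
    eulerL p k (MonoidAlgebra.single g r) = cc p k (toAdd g) • MonoidAlgebra.single g r := by
  show (Finsupp.lsum k fun g => (cc p k (toAdd g)) •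
    (MonoidAlgebra.lsingle (R := k) (S := k) g)) (Finsupp.single g r) = _
  simp only [Finsupp.lsum_single, LinearMap.smul_apply, MonoidAlgebra.lsingle_apply]

/-- The Euler derivation on the group algebra of `ZMod p`. -/
noncomputable def euler : Derivation k (MonoidAlgebra k (Multiplicative (ZMod p)))
    (MonoidAlgebra k (Multiplicative (ZMod p))) where
  toLinearMap := eulerL p k
  map_one_eq_zero' := by
    rw [MonoidAlgebra.one_def, eulerL_single]
    rw [show toAdd (1 : Multiplicative (ZMod p)) = 0 from rfl, map_zero, zero_smul]
  leibniz' := by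
    intro a b
    induction a using MonoidAlgebra.induction_linear with
    | zero => simp
    | add f g hf hg =>
        simp only [add_mul, map_add, hf, hg, add_smul, smul_add, smul_eq_mul, mul_add]
        ring
    | single g r =>
      induction b using MonoidAlgebra.induction_linear with
      | zero => simp
      | add f g hf hg =>
          simp only [mul_add, map_add, hf, hg, add_smul, smul_add, smul_eq_mul, add_mul, mul_add]
          ring
      | single h s =>
        show eulerL p k (MonoidAlgebra.single g r * MonoidAlgebra.single h s) = _
        rw [MonoidAlgebra.single_mul_single, eulerL_single]
        show _ = MonoidAlgebra.single g r * eulerL p k (MonoidAlgebra.single h s)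
          + MonoidAlgebra.single h s * eulerL p k (MonoidAlgebra.single g r)
        rw [eulerL_single, eulerL_single,
          show toAdd (g * h) = toAdd g + toAdd h from rfl, map_add, add_smul,
          mul_smul_comm, mul_smul_comm, MonoidAlgebra.single_mul_single,
          MonoidAlgebra.single_mul_single, mul_comm h g, mul_comm s r, add_comm]

/-- The element `∑ b, b⁻¹·x^b` of the group algebra. -/
noncomputable def Sel : MonoidAlgebra k (Multiplicative (ZMod p)) :=
  ∑ b : ZMod p, MonoidAlgebra.single (ofAdd b) (cc p k b⁻¹)

/-- The fixed-point derivation: `D = Sel • euler`. -/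
noncomputable def DD : Derivation k (MonoidAlgebra k (Multiplicative (ZMod p)))
    (MonoidAlgebra k (Multiplicative (ZMod p))) := Sel p k • euler p k

theorem DD_single (a : ZMod p) (r : k) :
    DD p k (MonoidAlgebra.single (ofAdd a) r)
      = ∑ b : ZMod p, MonoidAlgebra.single (ofAdd (a + b)) (cc p k a * cc p k b⁻¹ * r) := by
  show Sel p k • (euler p k (MonoidAlgebra.single (ofAdd a) r)) = _
  rw [show euler p k (MonoidAlgebra.single (ofAdd a) r)
      = cc p k (toAdd (ofAdd a)) • MonoidAlgebra.single (ofAdd a) r from eulerL_single p k _ r,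
    smul_comm, smul_eq_mul, Sel, Finset.sum_mul, Finset.smul_sum]
  refine Finset.sum_congr rfl fun b _ => ?_
  rw [toAdd_ofAdd, MonoidAlgebra.single_mul_single, MonoidAlgebra.smul_single, smul_eq_mul,
    show ofAdd b * ofAdd a = ofAdd (a + b) by rw [← ofAdd_add, add_comm]]
  exact congrArg (MonoidAlgebra.single _) (by ring)

/-- The group-like element `x`. -/
noncomputable abbrev XX : MonoidAlgebra k (Multiplicative (ZMod p)) :=
  MonoidAlgebra.single (ofAdd (1 : ZMod p)) (1 : k)

theorem XX_pow (n : ℕ) : (XX p k) ^ n = MonoidAlgebra.single (ofAdd (n : ZMod p)) (1 : k) := by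
  rw [MonoidAlgebra.single_pow, one_pow]
  congr 1
  rw [← ofAdd_nsmul, nsmul_eq_mul, mul_one]

theorem single_eq_XX_pow (z : ZMod p) :
    MonoidAlgebra.single (ofAdd z) (1 : k) = (XX p k) ^ z.val := by
  rw [XX_pow, ZMod.natCast_val, ZMod.cast_id]

/-- A derivation is determined by its value at `X`. -/
theorem derivation_ext (D₁ D₂ : Derivation k (MonoidAlgebra k (Multiplicative (ZMod p)))
    (MonoidAlgebra k (Multiplicative (ZMod p)))) (h : D₁ (XX p k) = D₂ (XX p k)) :
    D₁ = D₂ := by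
  have key : ∀ z : ZMod p, ∀ r : k,
      D₁ (MonoidAlgebra.single (ofAdd z) r) = D₂ (MonoidAlgebra.single (ofAdd z) r) := by
    intro z r
    have : (MonoidAlgebra.single (ofAdd z) r : MonoidAlgebra k (Multiplicative (ZMod p)))
        = r • MonoidAlgebra.single (ofAdd z) (1 : k) := by
      rw [MonoidAlgebra.smul_single, smul_eq_mul, mul_one]
    rw [this, D₁.map_smul, D₂.map_smul, single_eq_XX_pow, Derivation.leibniz_pow,
      Derivation.leibniz_pow, h]
  apply Derivation.ext
  intro a
  induction a using MonoidAlgebra.induction_linear with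
  | zero => simp
  | add f g hf hg => rw [map_add, map_add, hf, hg]
  | single g r => exact key (toAdd g) r

theorem mulAut_apply_ofAdd (σ : MulAut (Multiplicative (ZMod p))) (z : ZMod p) :
    σ (ofAdd z) = ofAdd (z * toAdd (σ (ofAdd (1 : ZMod p)))) := by
  have h1 : (ofAdd z : Multiplicative (ZMod p)) = (ofAdd (1 : ZMod p)) ^ z.val := by
    rw [← ofAdd_nsmul, nsmul_eq_mul, mul_one, ZMod.natCast_val, ZMod.cast_id]
  rw [h1, map_pow, ← ofAdd_toAdd (σ (ofAdd 1)), ← ofAdd_nsmul, nsmul_eq_mul,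
    ZMod.natCast_val, ZMod.cast_id, toAdd_ofAdd]

theorem mulAut_unit (σ : MulAut (Multiplicative (ZMod p))) :
    toAdd (σ⁻¹ (ofAdd (1 : ZMod p))) * toAdd (σ (ofAdd (1 : ZMod p))) = 1 := by
  have := mulAut_apply_ofAdd p σ (toAdd (σ⁻¹ (ofAdd (1 : ZMod p))))
  rw [ofAdd_toAdd] at this
  have h2 : σ (σ⁻¹ (ofAdd (1 : ZMod p))) = ofAdd (1 : ZMod p) := σ.apply_symm_apply _
  rw [h2] at this
  exact (ofAdd.injective this.symm)

theorem DD_comm_domCongr (σ : MulAut (Multiplicative (ZMod p)))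
    (a : MonoidAlgebra k (Multiplicative (ZMod p))) :
    MonoidAlgebra.domCongr k k σ (DD p k a) = DD p k (MonoidAlgebra.domCongr k k σ a) := by
  set s := toAdd (σ (ofAdd (1 : ZMod p))) with hs_def
  have hs0 : s ≠ 0 := right_ne_zero_of_mul_eq_one (mulAut_unit p σ)
  have hss : s * s⁻¹ = 1 := mul_inv_cancel₀ hs0
  have hcc : cc p k s * cc p k s⁻¹ = 1 := by rw [← map_mul, hss, map_one]
  induction a using MonoidAlgebra.induction_linear with
  | zero => simp
  | add f g hf hg => rw [map_add, map_add, map_add, hf, hg, map_add]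
  | single g r =>
    rw [← ofAdd_toAdd g]
    set z := toAdd g with hz
    show MonoidAlgebra.domCongr k k σ (DD p k (MonoidAlgebra.single (ofAdd z) r))
      = DD p k (MonoidAlgebra.domCongr k k σ (MonoidAlgebra.single (ofAdd z) r))
    have hbij : Function.Bijective (fun b : ZMod p => b * s) :=
      (Equiv.mulRight₀ s hs0).bijective
    rw [MonoidAlgebra.domCongr_single, mulAut_apply_ofAdd p σ z, ← hs_def, DD_single, DD_single,
      map_sum]
    rw [show (∑ b : ZMod p, MonoidAlgebra.domCongr k k σ
          (MonoidAlgebra.single (ofAdd (z + b)) (cc p k z * cc p k b⁻¹ * r)))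
        = ∑ b : ZMod p, MonoidAlgebra.single (ofAdd ((z + b) * s)) (cc p k z * cc p k b⁻¹ * r) from
      Finset.sum_congr rfl fun b _ => by
        rw [MonoidAlgebra.domCongr_single, mulAut_apply_ofAdd p σ, ← hs_def]]
    exact Fintype.sum_bijective _ hbij _ _ fun b => by
      rw [add_mul, mul_inv, map_mul, map_mul]
      exact congrArg₂ _ rfl (by linear_combination (-(cc p k z * cc p k b⁻¹ * r)) * hcc)

theorem two_ne_zero_zmod (hodd : p ≠ 2) : (2 : ZMod p) ≠ 0 := by
  intro h
  exact hodd ((Nat.prime_dvd_prime_iff_eq (Fact.out : p.Prime) Nat.prime_two).1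
    ((CharP.cast_eq_zero_iff (ZMod p) p 2).1 (by exact_mod_cast h)))

theorem two_ne_zero_k (hodd : p ≠ 2) : (2 : k) ≠ 0 := by
  intro h
  exact hodd ((Nat.prime_dvd_prime_iff_eq (Fact.out : p.Prime) Nat.prime_two).1
    ((CharP.cast_eq_zero_iff k p 2).1 (by exact_mod_cast h)))

theorem sum_univ_zmod (hodd : p ≠ 2) : ∑ b : ZMod p, b = 0 := by
  have h1 : ∑ b : ZMod p, b = ∑ b : ZMod p, -b :=
    Fintype.sum_bijective (fun b : ZMod p => -b) neg_involutive.bijective _ _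
      (fun b => (neg_neg b).symm)
  have h2 : (2 : ZMod p) * ∑ b : ZMod p, b = 0 := by
    rw [two_mul]
    nth_rewrite 2 [h1]
    rw [← Finset.sum_add_distrib]
    simp
  rcases mul_eq_zero.1 h2 with h | h
  · exact absurd h (two_ne_zero_zmod p hodd)
  · exact h

theorem sum_inv_zmod (hodd : p ≠ 2) : ∑ b : ZMod p, b⁻¹ = 0 := by
  rw [← sum_univ_zmod p hodd]
  exact Fintype.sum_bijective (fun b : ZMod p => b⁻¹) inv_involutive.bijective _ _
    (fun b => (inv_inv b).symm) |>.symm ▸ rfl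

theorem sum_mul_inv_zmod : ∑ b : ZMod p, b * b⁻¹ = -1 := by
  have : ∀ b : ZMod p, b * b⁻¹ = 1 - (if b = 0 then 1 else 0) := by
    intro b
    by_cases hb : b = 0 <;> simp [hb, mul_inv_cancel₀]
  rw [Finset.sum_congr rfl fun b _ => this b, Finset.sum_sub_distrib,
    Finset.sum_ite_eq' Finset.univ (0 : ZMod p) (fun _ => (1 : ZMod p))]
  simp only [Finset.sum_const, Finset.card_univ, ZMod.card, nsmul_eq_mul, mul_one,
    Finset.mem_univ, if_true]
  rw [CharP.cast_eq_zero]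
  ring

theorem main_id_zmod (hodd : p ≠ 2) (t : ZMod p) : ∑ a : ZMod p, a * (t - a)⁻¹ = 1 := by
  have h1 : ∑ a : ZMod p, a * (t - a)⁻¹ = ∑ b : ZMod p, (t - b) * b⁻¹ := by
    refine (Fintype.sum_bijective (fun b : ZMod p => t - b)
      (Function.Involutive.bijective fun b => by ring) _ _ fun b => ?_).symm
    rw [sub_sub_cancel]
  rw [h1]
  have h2 : ∀ b : ZMod p, (t - b) * b⁻¹ = t * b⁻¹ - b * b⁻¹ := fun b => by ring
  rw [Finset.sum_congr rfl fun b _ => h2 b, Finset.sum_sub_distrib, ← Finset.mul_sum,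
    sum_inv_zmod p hodd, sum_mul_inv_zmod p, mul_zero]
  ring

/-- The eigenvector `∑ a, x^a` with eigenvalue `1`. -/
noncomputable def f0 : MonoidAlgebra k (Multiplicative (ZMod p)) :=
  ∑ a : ZMod p, MonoidAlgebra.single (ofAdd a) (1 : k)

theorem f0_ne_zero : f0 p k ≠ 0 := by
  intro h
  have h2 : (f0 p k).coeff (ofAdd (0 : ZMod p)) = 0 := by rw [h]; rfl
  rw [f0, MonoidAlgebra.coeff_sum, Finset.sum_apply'] at h2
  rw [Finset.sum_eq_single (0 : ZMod p)] at h2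
  · rw [MonoidAlgebra.single_apply, if_pos rfl] at h2
    exact one_ne_zero h2
  · intro b _ hb
    rw [MonoidAlgebra.single_apply, if_neg (by simpa using hb)]
  · intro habs; exact absurd (Finset.mem_univ _) habs

theorem DD_f0 (hodd : p ≠ 2) : DD p k (f0 p k) = f0 p k := by
  rw [f0, map_sum]
  rw [Finset.sum_congr rfl fun a _ => DD_single p k a 1]
  have step1 : ∀ a : ZMod p,
      ∑ b : ZMod p, MonoidAlgebra.single (ofAdd (a + b)) (cc p k a * cc p k b⁻¹ * 1)
        = ∑ t : ZMod p, MonoidAlgebra.single (ofAdd t) (cc p k a * cc p k (t - a)⁻¹ * 1) := by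
    intro a
    refine Fintype.sum_bijective (fun b : ZMod p => a + b) (Equiv.addLeft a).bijective _ _
      fun b => ?_
    rw [add_sub_cancel_left]
  rw [Finset.sum_congr rfl fun a _ => step1 a, Finset.sum_comm]
  refine Finset.sum_congr rfl fun t _ => ?_
  have step2 : ∑ a : ZMod p, MonoidAlgebra.single (ofAdd t) (cc p k a * cc p k (t - a)⁻¹ * 1)
      = MonoidAlgebra.single (ofAdd t) (∑ a : ZMod p, cc p k a * cc p k (t - a)⁻¹ * 1) := by
    exact (map_sum (MonoidAlgebra.lsingle (R := k) (ofAdd t) :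
        k →ₗ[k] MonoidAlgebra k (Multiplicative (ZMod p)))
      (fun a : ZMod p => cc p k a * cc p k (t - a)⁻¹ * 1) Finset.univ).symm
  rw [step2]
  congr 1
  have : ∀ a : ZMod p, cc p k a * cc p k (t - a)⁻¹ * 1 = cc p k (a * (t - a)⁻¹) := fun a => by
    rw [map_mul, mul_one]
  rw [Finset.sum_congr rfl fun a _ => this a, ← map_sum, main_id_zmod p hodd t, map_one]

/-- The automorphism of `Multiplicative (ZMod p)` given by a unit. -/
noncomputable def sigmaU (u : (ZMod p)ˣ) : MulAut (Multiplicative (ZMod p)) where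
  toFun g := ofAdd (toAdd g * (u : ZMod p))
  invFun g := ofAdd (toAdd g * ((u⁻¹ : (ZMod p)ˣ) : ZMod p))
  left_inv g := by
    simp only [toAdd_ofAdd, mul_assoc, ← Units.val_mul, mul_inv_cancel, Units.val_one, mul_one,
      ofAdd_toAdd]
  right_inv g := by
    simp only [toAdd_ofAdd, mul_assoc, ← Units.val_mul, inv_mul_cancel, Units.val_one, mul_one,
      ofAdd_toAdd]
  map_mul' g h := by
    show ofAdd ((toAdd g + toAdd h) * (u : ZMod p)) = ofAdd (_) * ofAdd (_)
    rw [← ofAdd_add, add_mul]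

theorem sigmaU_apply (u : (ZMod p)ˣ) (z : ZMod p) :
    sigmaU p u (ofAdd z) = ofAdd (z * (u : ZMod p)) := rfl

theorem sigmaU_symm_apply (u : (ZMod p)ˣ) (z : ZMod p) :
    (sigmaU p u).symm (ofAdd z) = ofAdd (z * ((u⁻¹ : (ZMod p)ˣ) : ZMod p)) := rfl

theorem unique_fixed (hodd : p ≠ 2)
    (D' : Derivation k (MonoidAlgebra k (Multiplicative (ZMod p)))
      (MonoidAlgebra k (Multiplicative (ZMod p))))
    (h : ∀ σ : MulAut (Multiplicative (ZMod p)),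
        ∀ a, MonoidAlgebra.domCongr k k σ (D' ((MonoidAlgebra.domCongr k k σ).symm a)) = D' a) :
    ∃ c : k, D' = c • DD p k := by
  have hcomm : ∀ σ : MulAut (Multiplicative (ZMod p)), ∀ a,
      MonoidAlgebra.domCongr k k σ (D' a) = D' (MonoidAlgebra.domCongr k k σ a) := by
    intro σ a
    have := h σ (MonoidAlgebra.domCongr k k σ a)
    rwa [AlgEquiv.symm_apply_apply] at this
  set v : MonoidAlgebra k (Multiplicative (ZMod p)) := D' (XX p k) with hv
  have key : ∀ u : (ZMod p)ˣ, ∀ t : ZMod p,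
      v.coeff (ofAdd (t * ((u⁻¹ : (ZMod p)ˣ) : ZMod p)))
        = cc p k (u : ZMod p) * v.coeff (ofAdd (t - (u : ZMod p) + 1)) := by
    intro u t
    set su : ZMod p := (u : ZMod p) with hsu
    have hsu0 : su ≠ 0 := u.ne_zero
    set n : ℕ := su.val with hn
    have hn1 : 1 ≤ n := Nat.one_le_iff_ne_zero.2 (fun h0 => hsu0 ((ZMod.val_eq_zero su).1 h0))
    have hcast : ((n : ℕ) : ZMod p) = su := by rw [hn, ZMod.natCast_val, ZMod.cast_id]
    have hEq : MonoidAlgebra.domCongr k k (sigmaU p u) v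
        = D' (MonoidAlgebra.single (ofAdd su) 1) := by
      rw [hcomm (sigmaU p u) (XX p k)]
      congr 1
      rw [show (XX p k : MonoidAlgebra k (Multiplicative (ZMod p)))
          = MonoidAlgebra.single (ofAdd (1 : ZMod p)) (1 : k) from rfl,
        MonoidAlgebra.domCongr_single, sigmaU_apply, one_mul]
    rw [single_eq_XX_pow, Derivation.leibniz_pow, ← hn] at hEq
    have hEv := congrArg (fun f : MonoidAlgebra k (Multiplicative (ZMod p)) => f.coeff (ofAdd t)) hEq
    rw [MonoidAlgebra.domCongr_apply, sigmaU_symm_apply] at hEv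
    rw [← Nat.cast_smul_eq_nsmul k n, MonoidAlgebra.coeff_smul_apply, smul_eq_mul] at hEv
    have hXpow : (XX p k) ^ (n - 1) = MonoidAlgebra.single (ofAdd (su - 1)) (1 : k) := by
      rw [XX_pow]
      congr 2
      rw [Nat.cast_sub hn1, hcast, Nat.cast_one]
    rw [hXpow, smul_eq_mul, MonoidAlgebra.single_mul_apply, one_mul] at hEv
    have hpt : (ofAdd (su - 1) : Multiplicative (ZMod p))⁻¹ * ofAdd t = ofAdd (t - su + 1) := by
      rw [← ofAdd_neg, ← ofAdd_add]
      congr 1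
      ring
    rw [hpt] at hEv
    have hnk : (n : k) = cc p k su := by rw [← hcast, map_natCast]
    rw [hnk] at hEv
    exact hEv
  have h1 : v.coeff (ofAdd (1 : ZMod p)) = 0 := by
    have hk := key (-1 : (ZMod p)ˣ) (-1)
    have hu : (((-1 : (ZMod p)ˣ)⁻¹ : (ZMod p)ˣ) : ZMod p) = -1 := by norm_num
    have hval : ((-1 : (ZMod p)ˣ) : ZMod p) = -1 := by norm_num
    rw [hu, hval, show ((-1 : ZMod p) * (-1)) = 1 from by ring,
      show ((-1 : ZMod p) - (-1) + 1) = (1 : ZMod p) from by ring, map_neg,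
      show (cc p k) 1 = (1 : k) from map_one (cc p k)] at hk
    have h2 : (2 : k) * v.coeff (ofAdd (1 : ZMod p)) = 0 := by linear_combination hk
    rcases mul_eq_zero.1 h2 with hh | hh
    · exact absurd hh (two_ne_zero_k p k hodd)
    · exact hh
  have h2 : ∀ b : ZMod p, b ≠ 0 → v.coeff (ofAdd (1 + b)) = cc p k b⁻¹ * v.coeff (ofAdd (2 : ZMod p)) := by
    intro b hb
    have hb' : (b⁻¹ : ZMod p) ≠ 0 := inv_ne_zero hb
    have hk := key (Units.mk0 b⁻¹ hb') (b⁻¹ + 1)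
    rw [Units.val_inv_eq_inv_val, Units.val_mk0, inv_inv,
      show (b⁻¹ + 1) * b = 1 + b from by rw [add_mul, inv_mul_cancel₀ hb, one_mul],
      show b⁻¹ + 1 - b⁻¹ + 1 = (2 : ZMod p) from by ring] at hk
    exact hk
  refine ⟨v.coeff (ofAdd (2 : ZMod p)), ?_⟩
  apply derivation_ext
  have hsmul : (v.coeff (ofAdd (2 : ZMod p)) • DD p k) (XX p k)
      = v.coeff (ofAdd (2 : ZMod p)) • (DD p k (XX p k)) := rfl
  rw [hsmul, show DD p k (XX p k)
      = ∑ b : ZMod p, MonoidAlgebra.single (ofAdd ((1 : ZMod p) + b))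
          (cc p k 1 * cc p k b⁻¹ * 1) from DD_single p k 1 1]
  show v = _
  ext g
  rw [← ofAdd_toAdd g]
  set w := toAdd g with hw
  rw [MonoidAlgebra.coeff_smul_apply, MonoidAlgebra.coeff_sum, Finset.sum_apply']
  rw [Finset.sum_eq_single (w - 1)]
  · rw [show (1 : ZMod p) + (w - 1) = w from by ring]
    rw [MonoidAlgebra.single_apply, if_pos rfl, map_one, one_mul, mul_one, smul_eq_mul]
    by_cases hw1 : w = 1
    · rw [hw1, h1, show (1 : ZMod p) - 1 = 0 from by ring, inv_zero, map_zero, mul_zero]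
    · have hb : w - 1 ≠ 0 := sub_ne_zero.2 hw1
      rw [show (w : ZMod p) = 1 + (w - 1) from by ring, h2 (w - 1) hb, mul_comm,
        show (1 : ZMod p) + (w - 1) = w from by ring]
  · intro b _ hbne
    rw [MonoidAlgebra.single_apply, if_neg]
    intro hcon
    exact hbne (by
      have : (1 : ZMod p) + b = w := by simpa [-ofAdd_add] using hcon
      rw [← this]; ring)
  · intro habs; exact absurd (Finset.mem_univ _) habs

theorem iter_leibniz {R A : Type*} [CommRing R] [CommRing A] [Algebra R A]
    (D : Derivation R A A) (n : ℕ) (a b : A) :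
    (D.toLinearMap ^ n) (a * b)
      = ∑ i ∈ Finset.range (n+1), (n.choose i) •
          ((D.toLinearMap ^ i) a * (D.toLinearMap ^ (n-i)) b) := by
  induction n with
  | zero => simp
  | succ n ih =>
    have hDpow : ∀ (m : ℕ) (c : A),
        (D.toLinearMap ^ (m+1)) c = D.toLinearMap ((D.toLinearMap ^ m) c) := by
      intro m c; rw [pow_succ', Module.End.mul_apply]
    set t : ℕ → A := fun i => (D.toLinearMap ^ i) a * (D.toLinearMap ^ (n+1-i)) b with ht
    have hC : ∑ i ∈ Finset.range (n+1+1), (n.choose i) • t i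
        = ∑ i ∈ Finset.range (n+1), (n.choose i) • t i := by
      rw [Finset.sum_range_succ, Nat.choose_succ_self, zero_smul, add_zero]
    have hstep : (D.toLinearMap ^ (n+1)) (a * b)
        = ∑ i ∈ Finset.range (n+1),
            ((n.choose i) • t i + (n.choose i) • t (i+1)) := by
      rw [hDpow n (a*b), ih, map_sum]
      refine Finset.sum_congr rfl fun i hi => ?_
      have hin : i ≤ n := Nat.lt_succ_iff.1 (Finset.mem_range.1 hi)
      have hl := D.leibniz ((D.toLinearMap ^ i) a) ((D.toLinearMap ^ (n-i)) b)
      rw [smul_eq_mul, smul_eq_mul] at hl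
      have e1 : t i = (D.toLinearMap ^ i) a * D.toLinearMap ((D.toLinearMap ^ (n-i)) b) := by
        show (D.toLinearMap ^ i) a * (D.toLinearMap ^ (n+1-i)) b = _
        rw [Nat.succ_sub hin, hDpow]
      have e2 : t (i+1) = D.toLinearMap ((D.toLinearMap ^ i) a) * (D.toLinearMap ^ (n-i)) b := by
        show (D.toLinearMap ^ (i+1)) a * (D.toLinearMap ^ (n+1-(i+1))) b = _
        rw [Nat.succ_sub_succ, hDpow]
      rw [map_nsmul, show (D.toLinearMap) ((D.toLinearMap ^ i) a * (D.toLinearMap ^ (n-i)) b)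
          = _ from hl, e1, e2, ← smul_add]
      congr 1
      simp only [Derivation.coeFn_coe]
      ring
    have hB : (∑ i ∈ Finset.range (n+1), (n.choose (i+1)) • t (i+1)) + t 0
        = ∑ i ∈ Finset.range (n+1), (n.choose i) • t i := by
      rw [show t 0 = (n.choose 0) • t 0 from by rw [Nat.choose_zero_right, one_smul]]
      exact ((Finset.sum_range_succ' (fun i => (n.choose i) • t i) (n+1)).symm).trans hC
    have hsplit : ∀ i, ((n+1).choose (i+1)) • t (i+1)
        = (n.choose i) • t (i+1) + (n.choose (i+1)) • t (i+1) := by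
      intro i; rw [Nat.choose_succ_succ, add_smul]
    rw [hstep, Finset.sum_add_distrib,
      Finset.sum_range_succ' (fun i => ((n+1).choose i) • t i) (n+1),
      Finset.sum_congr rfl fun i _ => hsplit i, Finset.sum_add_distrib,
      Nat.choose_zero_right, one_smul, add_assoc, hB]
    exact add_comm _ _

/-- The `p`-th power of a derivation in characteristic `p` is a derivation. -/
noncomputable def powDeriv {R A : Type*} [CommRing R] [CommRing A] [Algebra R A]
    (q : ℕ) (hq : q.Prime) [CharP A q] (D : Derivation R A A) : Derivation R A A where
  toLinearMap := D.toLinearMap ^ q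
  map_one_eq_zero' := by
    obtain ⟨m, rfl⟩ : ∃ m, q = m + 1 := ⟨q - 1, (Nat.succ_pred_eq_of_pos hq.pos).symm⟩
    rw [pow_succ, Module.End.mul_apply]
    rw [show D.toLinearMap (1 : A) = 0 from D.map_one_eq_zero, map_zero]
  leibniz' := by
    intro a b
    rw [iter_leibniz D q a b, Finset.sum_range_succ, Nat.choose_self, one_smul,
      Nat.sub_self, pow_zero, Module.End.one_apply]
    rw [show ∑ i ∈ Finset.range q, (q.choose i) •
          ((D.toLinearMap ^ i) a * (D.toLinearMap ^ (q-i)) b)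
        = ∑ i ∈ Finset.range q, if i = 0 then a * (D.toLinearMap ^ q) b else 0 from
      Finset.sum_congr rfl fun i hi => by
        by_cases h0 : i = 0
        · subst h0; simp
        · rw [if_neg h0]
          have hdvd : q ∣ q.choose i := hq.dvd_choose_self h0 (Finset.mem_range.1 hi)
          obtain ⟨c, hc⟩ := hdvd
          rw [hc, mul_comm, mul_nsmul, nsmul_eq_mul, CharP.cast_eq_zero A q, zero_mul]]
    rw [Finset.sum_ite_eq' (Finset.range q) 0 (fun _ => a * (D.toLinearMap ^ q) b),
      if_pos (Finset.mem_range.2 hq.pos)]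
    rw [smul_eq_mul, smul_eq_mul]
    ring

theorem DD_ne_zero : DD p k ≠ 0 := by
  intro h
  have h1 : DD p k (XX p k) = 0 := by rw [h]; rfl
  rw [show (XX p k : MonoidAlgebra k (Multiplicative (ZMod p)))
      = MonoidAlgebra.single (ofAdd (1 : ZMod p)) (1 : k) from rfl, DD_single] at h1
  have h2 := congrArg
    (fun f : MonoidAlgebra k (Multiplicative (ZMod p)) => f.coeff (ofAdd (2 : ZMod p))) h1
  rw [MonoidAlgebra.coeff_sum, Finset.sum_apply'] at h2
  rw [Finset.sum_eq_single (1 : ZMod p)] at h2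
  · rw [show (1 : ZMod p) + 1 = 2 from by ring, MonoidAlgebra.single_apply, if_pos rfl,
      inv_one, map_one, mul_one, mul_one] at h2
    exact one_ne_zero (h2.trans rfl)
  · intro b _ hbne
    rw [MonoidAlgebra.single_apply, if_neg]
    intro hcon
    exact hbne (by
      have : (1 : ZMod p) + b = 2 := by simpa [-ofAdd_add] using hcon
      have h3 := sub_eq_of_eq_add' this.symm
      rw [← h3]; ring)
  · intro habs; exact absurd (Finset.mem_univ _) habs

theorem DD_pow_eq (hodd : p ≠ 2) [CharP (MonoidAlgebra k (Multiplicative (ZMod p))) p] :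
    (DD p k).toLinearMap ^ p = (DD p k).toLinearMap := by
  set L := (DD p k).toLinearMap with hL
  let Dp : Derivation k (MonoidAlgebra k (Multiplicative (ZMod p)))
      (MonoidAlgebra k (Multiplicative (ZMod p))) := powDeriv p Fact.out (DD p k)
  have hDpapp : ∀ a, Dp a = (L ^ p) a := fun a => rfl
  have hcommpow : ∀ (σ : MulAut (Multiplicative (ZMod p))) (m : ℕ) (a),
      MonoidAlgebra.domCongr k k σ ((L ^ m) a) = (L ^ m) (MonoidAlgebra.domCongr k k σ a) := by
    intro σ m
    induction m with
    | zero => intro a; simp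
    | succ m ih =>
      intro a
      rw [pow_succ, Module.End.mul_apply, Module.End.mul_apply, ih,
        show MonoidAlgebra.domCongr k k σ (L a) = L (MonoidAlgebra.domCongr k k σ a) from
          DD_comm_domCongr p k σ a]
  have hDp : ∀ σ : MulAut (Multiplicative (ZMod p)), ∀ a,
      MonoidAlgebra.domCongr k k σ (Dp ((MonoidAlgebra.domCongr k k σ).symm a)) = Dp a := by
    intro σ a
    rw [hDpapp, hDpapp, hcommpow σ p, AlgEquiv.apply_symm_apply]
  obtain ⟨c, hc⟩ := unique_fixed p k hodd Dp hDp
  have hf0pow : ∀ m : ℕ, (L ^ m) (f0 p k) = f0 p k := by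
    intro m
    induction m with
    | zero => simp
    | succ m ih =>
      rw [pow_succ, Module.End.mul_apply, show L (f0 p k) = DD p k (f0 p k) from rfl,
        DD_f0 p k hodd, ih]
  have hceq : c • f0 p k = f0 p k := by
    have h1 : Dp (f0 p k) = f0 p k := (hDpapp _).trans (hf0pow p)
    rw [hc, Derivation.smul_apply, DD_f0 p k hodd] at h1
    exact h1
  have hc1 : c = 1 := by
    by_contra hne
    have hz : (c - 1) • f0 p k = 0 := by rw [sub_smul, one_smul, hceq, sub_self]
    rcases smul_eq_zero.1 hz with hh | hh
    · exact hne (sub_eq_zero.1 hh)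
    · exact f0_ne_zero p k hh
  have hfinal : Dp = DD p k := by rw [hc, hc1, one_smul]
  exact congrArg Derivation.toLinearMap hfinal

end StatementTen

/-- Let `p` be an odd prime, `P = ⟨x⟩` cyclic of order `p`, and
`E = Aut(P)` (cyclic of order `p − 1`).  Then the fixed-point space `Der_k(kP)^E` is
one-dimensional over `k`, spanned by a derivation `D` with `D^{∘p} = D`; that is,
`HH¹(kP)^E ≅ Der_k(kP)^E` has a `p`-toral basis.
(`P` is realised as `Multiplicative (ZMod p)`; an automorphism `σ` acts on a derivation `D`
by `a ↦ σ(D(σ⁻¹(a)))`, where `σ` also denotes the induced algebra automorphism of `kP`.) -/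
theorem fixed_derivations_one_dimensional_p_toral
    (p : ℕ) (hp : p.Prime) (hodd : p ≠ 2)
    (k : Type*) [Field k] [CharP k p] [IsAlgClosed k] :
    ∃ D : Derivation k (MonoidAlgebra k (Multiplicative (ZMod p)))
        (MonoidAlgebra k (Multiplicative (ZMod p))),
      D ≠ 0 ∧
      (∀ σ : MulAut (Multiplicative (ZMod p)),
        ∀ a, MonoidAlgebra.domCongr k k σ (D ((MonoidAlgebra.domCongr k k σ).symm a)) = D a) ∧
      (∀ D' : Derivation k (MonoidAlgebra k (Multiplicative (ZMod p)))
          (MonoidAlgebra k (Multiplicative (ZMod p))),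
        (∀ σ : MulAut (Multiplicative (ZMod p)),
          ∀ a, MonoidAlgebra.domCongr k k σ (D' ((MonoidAlgebra.domCongr k k σ).symm a)) = D' a)
          → ∃ c : k, D' = c • D) ∧
      (D.toLinearMap ^ p = D.toLinearMap) := by
  haveI := Fact.mk hp
  haveI : CharP (MonoidAlgebra k (Multiplicative (ZMod p))) p :=
    charP_of_injective_algebraMap' k p
  refine ⟨StatementTen.DD p k, StatementTen.DD_ne_zero p k, ?_, ?_, ?_⟩
  · intro σ a
    rw [StatementTen.DD_comm_domCongr, AlgEquiv.apply_symm_apply]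
  · exact fun D' hD' => StatementTen.unique_fixed p k hodd D' hD'
  · exact StatementTen.DD_pow_eq p k hodd
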